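/- The cube hypergraph Q³(4) is loose Hamilton connected: for any two distinct vertices a, b ∈ {0,1,2}^4 there exists a loose Hamilton path in Q³(4) from a to b covering all 81 vertices. -/

import Mathlib

set_option maxRecDepth 1000000

/-- An edge of the 3-uniform cube hypergraph `Q³(d)`: a set of 3 pairwise
distinct sequences in `{0,1,2}^d` that agree on all but one coordinate. -/
def cubeEdge (d : ℕ) (e : Finset (Fin d → Fin 3)) : Prop :=
  e.card = 3 ∧ ∃ i : Fin d, ∀ u ∈ e, ∀ v ∈ e, ∀ j : Fin d, j ≠ i → u j = v j

/-- A loose Hamilton path in `Q³(d)` from `a` to `b`. -/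
def looseHamPath (d : ℕ) (a b : Fin d → Fin 3) : Prop :=
  ∃ (ℓ : ℕ) (v : Fin (2 * ℓ + 1) → (Fin d → Fin 3))
    (e : Fin ℓ → Finset (Fin d → Fin 3)),
    Function.Injective v ∧ Function.Surjective v ∧
    v 0 = a ∧ v (Fin.last (2 * ℓ)) = b ∧
    Function.Injective e ∧ (∀ i, cubeEdge d (e i)) ∧
    ∀ i : Fin ℓ, e i = {v ⟨2 * (i : ℕ), by have := i.isLt; omega⟩,
      v ⟨2 * (i : ℕ) + 1, by have := i.isLt; omega⟩,
      v ⟨2 * (i : ℕ) + 2, by have := i.isLt; omega⟩}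

abbrev V4 := Fin 4 → Fin 3

def dec3 (n : ℕ) : V4 := fun i => ⟨n / 3 ^ (i : ℕ) % 3, Nat.mod_lt _ (by norm_num)⟩

def enc3 (x : V4) : ℕ := (x 0 : ℕ) + 3 * (x 1 : ℕ) + 9 * (x 2 : ℕ) + 27 * (x 3 : ℕ)

lemma enc_dec3 : ∀ n : Fin 81, enc3 (dec3 n.val) = n.val := by decide

lemma dec3_inj {m n : ℕ} (hm : m < 81) (hn : n < 81) (h : dec3 m = dec3 n) : m = n := by
  have h1 := enc_dec3 ⟨m, hm⟩
  have h2 := enc_dec3 ⟨n, hn⟩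
  simp only at h1 h2
  rw [← h1, ← h2, h]

def pv (L : List ℕ) (h : L.length = 81) : Fin (2 * 40 + 1) → V4 :=
  fun i => dec3 (L.get ⟨i.val, by omega⟩)

lemma pv_inj (L : List ℕ) (h : L.length = 81) (hlt : ∀ n ∈ L, n < 81) (hnd : L.Nodup) :
    Function.Injective (pv L h) := by
  intro i j hij
  have hi : L.get ⟨i.val, by omega⟩ < 81 := hlt _ (L.get_mem _)
  have hj : L.get ⟨j.val, by omega⟩ < 81 := hlt _ (L.get_mem _)
  have := dec3_inj hi hj hij
  have h2 : (⟨i.val, by omega⟩ : Fin L.length) = ⟨j.val, by omega⟩ :=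
    hnd.get_inj_iff.mp (by exact_mod_cast this)
  exact Fin.ext (by simpa using h2)

lemma pv_surj (L : List ℕ) (h : L.length = 81) (hlt : ∀ n ∈ L, n < 81) (hnd : L.Nodup) :
    Function.Surjective (pv L h) :=
  ((Fintype.bijective_iff_injective_and_card _).mpr
    ⟨pv_inj L h hlt hnd, by simp⟩).2

lemma e_triple_inj {v : Fin (2 * 40 + 1) → V4} (hv : Function.Injective v) :
    Function.Injective (fun i : Fin 40 =>
      ({v ⟨2 * (i : ℕ), by omega⟩, v ⟨2 * (i : ℕ) + 1, by omega⟩,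
        v ⟨2 * (i : ℕ) + 2, by omega⟩} : Finset V4)) := by
  intro i j h
  simp only at h
  have hmem : v ⟨2 * (i : ℕ) + 1, by omega⟩ ∈
      ({v ⟨2 * (j : ℕ), by omega⟩, v ⟨2 * (j : ℕ) + 1, by omega⟩,
        v ⟨2 * (j : ℕ) + 2, by omega⟩} : Finset V4) := by
    rw [← h]; simp
  simp only [Finset.mem_insert, Finset.mem_singleton] at hmem
  rcases hmem with h' | h' | h' <;>
    · have := hv h'
      have := Fin.val_eq_of_eq this
      simp only at this
      exact Fin.ext (by omega)

lemma cubeEdge_triple {x y z : V4} (hxy : x ≠ y) (hxz : x ≠ z) (hyz : y ≠ z)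
    (c : Fin 4) (h : ∀ j, j ≠ c → x j = y j ∧ x j = z j) :
    cubeEdge 4 ({x, y, z} : Finset V4) := by
  constructor
  · rw [Finset.card_eq_three]; exact ⟨x, y, z, hxy, hxz, hyz, rfl⟩
  · refine ⟨c, ?_⟩
    intro u hu v hv j hj
    simp only [Finset.mem_insert, Finset.mem_singleton] at hu hv
    have h1 := (h j hj).1
    have h2 := (h j hj).2
    rcases hu with rfl | rfl | rfl <;> rcases hv with rfl | rfl | rfl <;> omega

lemma looseHamPath_of_pv (a b : V4) (L : List ℕ) (h : L.length = 81)
    (hlt : ∀ n ∈ L, n < 81) (hnd : L.Nodup)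
    (h0 : pv L h 0 = a) (h80 : pv L h (Fin.last (2 * 40)) = b)
    (hedge : ∀ i : Fin 40, ∃ c : Fin 4, ∀ j, j ≠ c →
      pv L h ⟨2 * (i : ℕ), by omega⟩ j = pv L h ⟨2 * (i : ℕ) + 1, by omega⟩ j ∧
      pv L h ⟨2 * (i : ℕ), by omega⟩ j = pv L h ⟨2 * (i : ℕ) + 2, by omega⟩ j) :
    looseHamPath 4 a b := by
  have hinj := pv_inj L h hlt hnd
  have hne : ∀ (m n : ℕ) (hm : m < 2 * 40 + 1) (hn : n < 2 * 40 + 1), m ≠ n →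
      pv L h ⟨m, hm⟩ ≠ pv L h ⟨n, hn⟩ := by
    intro m n hm hn hmn heq
    exact hmn (by simpa using Fin.val_eq_of_eq (hinj heq))
  have hedge' : ∀ i : Fin 40, cubeEdge 4
      ({pv L h ⟨2 * (i : ℕ), by omega⟩, pv L h ⟨2 * (i : ℕ) + 1, by omega⟩,
        pv L h ⟨2 * (i : ℕ) + 2, by omega⟩} : Finset V4) := by
    intro i
    obtain ⟨c, hc⟩ := hedge i
    exact cubeEdge_triple (hne _ _ _ _ (by omega)) (hne _ _ _ _ (by omega))
      (hne _ _ _ _ (by omega)) c hc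
  exact ⟨40, pv L h, fun i => ({pv L h ⟨2 * (i : ℕ), by omega⟩,
      pv L h ⟨2 * (i : ℕ) + 1, by omega⟩, pv L h ⟨2 * (i : ℕ) + 2, by omega⟩} : Finset V4),
    hinj, pv_surj L h hlt hnd, h0, h80, e_triple_inj hinj, hedge', fun i => rfl⟩

def applyPerm (σ : Fin 4 → Equiv.Perm (Fin 3)) : V4 ≃ V4 := Equiv.piCongrRight σ

lemma cubeEdge_image (σ : Fin 4 → Equiv.Perm (Fin 3)) {e : Finset V4}
    (he : cubeEdge 4 e) : cubeEdge 4 (e.image (applyPerm σ)) := by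
  obtain ⟨hcard, i, hi⟩ := he
  refine ⟨by rw [Finset.card_image_of_injective _ (applyPerm σ).injective, hcard], i, ?_⟩
  intro u hu v hv j hj
  simp only [Finset.mem_image] at hu hv
  obtain ⟨u', hu', rfl⟩ := hu
  obtain ⟨v', hv', rfl⟩ := hv
  show σ j (u' j) = σ j (v' j)
  rw [hi u' hu' v' hv' j hj]

lemma looseHamPath_map (σ : Fin 4 → Equiv.Perm (Fin 3)) {a b : V4}
    (h : looseHamPath 4 a b) : looseHamPath 4 (applyPerm σ a) (applyPerm σ b) := by
  obtain ⟨ℓ, v, e, hvi, hvs, h0, h80, hei, hce, hrel⟩ := h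
  refine ⟨ℓ, fun i => applyPerm σ (v i), fun i => (e i).image (applyPerm σ),
    (applyPerm σ).injective.comp hvi, (applyPerm σ).surjective.comp hvs,
    by show applyPerm σ (v 0) = _; rw [h0],
    by show applyPerm σ (v (Fin.last (2 * ℓ))) = _; rw [h80],
    ?_, fun i => cubeEdge_image σ (hce i), ?_⟩
  · intro i j hij
    exact hei (Finset.image_injective (applyPerm σ).injective hij)
  · intro i
    show (e i).image (applyPerm σ) = _
    rw [hrel i]
    simp only [Finset.image_insert, Finset.image_singleton]

lemma key3 : ∀ (w p q : Fin 3), (w ≠ 0 → p ≠ q) →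
    ∃ s : Equiv.Perm (Fin 3), s 0 = p ∧ (w ≠ 0 → s w = q) := by decide

lemma transport (a b c : V4) (hc : ∀ i, (c i ≠ 0 ↔ a i ≠ b i))
    (h : looseHamPath 4 (fun _ => 0) c) : looseHamPath 4 a b := by
  choose σ hσ1 hσ2 using fun i => key3 (c i) (a i) (b i) (fun hw => (hc i).mp hw)
  have h2 := looseHamPath_map σ h
  have ha : applyPerm σ (fun _ => 0) = a := funext fun i => hσ1 i
  have hb : applyPerm σ c = b := funext fun i => by
    by_cases hw : c i = 0
    · have hab : a i = b i := not_not.mp (fun hne => (hc i).mpr hne hw)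
      show σ i (c i) = b i
      rw [hw, hσ1 i, hab]
    · exact hσ2 i hw
  rwa [ha, hb] at h2

def L1 : List ℕ := [0, 27, 54, 63, 72, 45, 18, 20, 19, 10, 1, 55, 28, 46, 37, 40, 43, 44, 42, 36, 39, 30, 48, 49, 50, 53, 47, 38, 29, 32, 35, 33, 34, 61, 7, 16, 25, 52, 79, 73, 76, 75, 77, 80, 74, 65, 56, 62, 59, 57, 58, 31, 4, 13, 22, 23, 21, 3, 12, 9, 15, 6, 24, 51, 78, 60, 69, 71, 70, 64, 67, 66, 68, 41, 14, 11, 17, 26, 8, 5, 2]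

lemma path1 : looseHamPath 4 (fun _ => 0) ![2, 0, 0, 0] :=
  looseHamPath_of_pv _ _ L1 rfl (by decide) (by decide) (by decide) (by decide) (by decide)

def L2 : List ℕ := [0, 27, 54, 55, 56, 29, 2, 5, 8, 62, 35, 53, 44, 17, 71, 69, 70, 67, 64, 63, 65, 38, 11, 9, 10, 1, 19, 18, 20, 74, 47, 45, 46, 28, 37, 40, 43, 52, 34, 61, 7, 16, 25, 26, 24, 15, 6, 60, 33, 51, 42, 36, 39, 48, 30, 31, 32, 41, 50, 23, 77, 68, 59, 58, 57, 66, 75, 72, 78, 80, 79, 73, 76, 49, 22, 4, 13, 14, 12, 21, 3]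

lemma path2 : looseHamPath 4 (fun _ => 0) ![0, 1, 0, 0] :=
  looseHamPath_of_pv _ _ L2 rfl (by decide) (by decide) (by decide) (by decide) (by decide)

def L3 : List ℕ := [0, 6, 3, 12, 21, 24, 18, 19, 20, 23, 26, 80, 53, 44, 35, 33, 34, 43, 52, 49, 46, 28, 37, 10, 64, 70, 67, 40, 13, 22, 4, 1, 7, 25, 16, 17, 15, 42, 69, 78, 60, 62, 61, 55, 58, 59, 57, 66, 75, 77, 76, 79, 73, 74, 72, 54, 63, 9, 36, 27, 45, 51, 48, 39, 30, 31, 32, 50, 41, 14, 68, 71, 65, 11, 38, 47, 29, 56, 2, 5, 8]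

lemma path3 : looseHamPath 4 (fun _ => 0) ![2, 2, 0, 0] :=
  looseHamPath_of_pv _ _ L3 rfl (by decide) (by decide) (by decide) (by decide) (by decide)

def L4 : List ℕ := [0, 3, 6, 15, 24, 26, 25, 7, 16, 43, 70, 61, 79, 80, 78, 69, 60, 54, 57, 59, 58, 67, 76, 75, 77, 50, 23, 21, 22, 4, 13, 14, 12, 66, 39, 48, 30, 32, 31, 40, 49, 46, 52, 53, 51, 42, 33, 34, 35, 62, 8, 5, 2, 56, 29, 28, 27, 45, 36, 37, 38, 41, 44, 17, 71, 68, 65, 63, 64, 55, 73, 72, 74, 47, 20, 18, 19, 1, 10, 11, 9]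

lemma path4 : looseHamPath 4 (fun _ => 0) ![0, 0, 1, 0] :=
  looseHamPath_of_pv _ _ L4 rfl (by decide) (by decide) (by decide) (by decide) (by decide)

def L5 : List ℕ := [0, 3, 6, 15, 24, 26, 25, 7, 16, 43, 70, 61, 79, 80, 78, 69, 60, 54, 57, 59, 58, 67, 76, 75, 77, 50, 23, 21, 22, 4, 13, 14, 12, 66, 39, 48, 30, 32, 31, 40, 49, 46, 52, 53, 51, 42, 33, 34, 35, 62, 8, 5, 2, 56, 29, 28, 27, 45, 36, 37, 38, 41, 44, 17, 71, 68, 65, 63, 64, 55, 73, 72, 74, 47, 20, 18, 19, 1, 10, 9, 11]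

lemma path5 : looseHamPath 4 (fun _ => 0) ![2, 0, 1, 0] :=
  looseHamPath_of_pv _ _ L5 rfl (by decide) (by decide) (by decide) (by decide) (by decide)

def L6 : List ℕ := [0, 18, 9, 63, 36, 37, 38, 44, 41, 32, 50, 47, 53, 26, 80, 62, 71, 65, 68, 77, 59, 58, 57, 54, 60, 69, 78, 75, 72, 74, 73, 76, 79, 61, 70, 64, 67, 13, 40, 31, 49, 46, 52, 43, 34, 35, 33, 42, 51, 45, 48, 30, 39, 66, 12, 21, 3, 4, 5, 23, 14, 17, 11, 20, 2, 56, 29, 27, 28, 55, 1, 10, 19, 22, 25, 16, 7, 8, 6, 15, 24]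

lemma path6 : looseHamPath 4 (fun _ => 0) ![0, 2, 2, 0] :=
  looseHamPath_of_pv _ _ L6 rfl (by decide) (by decide) (by decide) (by decide) (by decide)

def L7 : List ℕ := [0, 2, 1, 55, 28, 29, 27, 45, 36, 63, 9, 11, 10, 37, 64, 70, 67, 76, 58, 4, 31, 32, 30, 3, 57, 54, 60, 61, 62, 56, 59, 77, 68, 65, 71, 17, 44, 38, 41, 40, 39, 66, 12, 13, 14, 5, 23, 22, 21, 48, 75, 72, 78, 79, 80, 26, 53, 50, 47, 74, 20, 18, 19, 73, 46, 49, 52, 43, 34, 35, 33, 51, 42, 69, 15, 24, 6, 8, 7, 25, 16]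

lemma path7 : looseHamPath 4 (fun _ => 0) ![1, 2, 1, 0] :=
  looseHamPath_of_pv _ _ L7 rfl (by decide) (by decide) (by decide) (by decide) (by decide)

def L8 : List ℕ := [0, 3, 6, 15, 24, 26, 25, 7, 16, 43, 70, 61, 79, 80, 78, 75, 72, 73, 74, 47, 20, 18, 19, 1, 10, 9, 11, 14, 17, 44, 71, 68, 65, 64, 63, 69, 66, 12, 39, 48, 30, 31, 32, 41, 50, 77, 23, 21, 22, 4, 13, 40, 67, 76, 58, 59, 57, 60, 54, 55, 56, 29, 2, 5, 8, 62, 35, 34, 33, 42, 51, 53, 52, 49, 46, 28, 37, 38, 36, 45, 27]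

lemma path8 : looseHamPath 4 (fun _ => 0) ![0, 0, 0, 1] :=
  looseHamPath_of_pv _ _ L8 rfl (by decide) (by decide) (by decide) (by decide) (by decide)

def L9 : List ℕ := [0, 9, 18, 24, 21, 23, 22, 4, 13, 16, 10, 19, 1, 28, 55, 61, 58, 59, 57, 3, 30, 27, 33, 60, 6, 7, 8, 5, 2, 20, 11, 17, 14, 41, 68, 67, 66, 12, 39, 36, 42, 15, 69, 70, 71, 62, 80, 26, 53, 44, 35, 32, 29, 38, 47, 46, 45, 51, 48, 50, 49, 31, 40, 37, 43, 34, 52, 25, 79, 73, 76, 77, 75, 78, 72, 54, 63, 64, 65, 74, 56]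

lemma path9 : looseHamPath 4 (fun _ => 0) ![2, 0, 0, 2] :=
  looseHamPath_of_pv _ _ L9 rfl (by decide) (by decide) (by decide) (by decide) (by decide)

def L10 : List ℕ := [0, 3, 6, 15, 24, 26, 25, 7, 16, 43, 70, 61, 79, 80, 78, 72, 75, 76, 77, 50, 23, 21, 22, 4, 13, 12, 14, 11, 17, 44, 71, 65, 68, 67, 66, 69, 63, 9, 36, 45, 27, 28, 29, 38, 47, 74, 20, 18, 19, 1, 10, 37, 64, 73, 55, 56, 54, 60, 57, 58, 59, 32, 5, 2, 8, 62, 35, 34, 33, 42, 51, 53, 52, 46, 49, 31, 40, 41, 39, 48, 30]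

lemma path10 : looseHamPath 4 (fun _ => 0) ![0, 1, 0, 1] :=
  looseHamPath_of_pv _ _ L10 rfl (by decide) (by decide) (by decide) (by decide) (by decide)

def L11 : List ℕ := [0, 9, 18, 72, 45, 36, 27, 29, 28, 37, 46, 19, 73, 55, 64, 63, 65, 74, 56, 62, 59, 5, 32, 31, 30, 3, 57, 54, 60, 69, 78, 80, 79, 61, 70, 43, 16, 10, 13, 22, 4, 1, 7, 8, 6, 15, 24, 25, 26, 23, 20, 2, 11, 14, 17, 71, 44, 38, 41, 40, 39, 12, 66, 68, 67, 58, 76, 77, 75, 21, 48, 49, 50, 47, 53, 52, 51, 42, 33, 34, 35]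

lemma path11 : looseHamPath 4 (fun _ => 0) ![2, 2, 0, 1] :=
  looseHamPath_of_pv _ _ L11 rfl (by decide) (by decide) (by decide) (by decide) (by decide)

def L12 : List ℕ := [0, 54, 27, 28, 29, 47, 38, 65, 11, 10, 9, 36, 63, 69, 66, 67, 68, 77, 59, 56, 62, 60, 61, 58, 55, 64, 73, 74, 72, 75, 78, 80, 79, 25, 52, 46, 49, 76, 22, 13, 4, 1, 7, 6, 8, 2, 5, 14, 23, 26, 20, 19, 18, 24, 21, 12, 3, 57, 30, 31, 32, 50, 41, 39, 40, 37, 43, 70, 16, 15, 17, 71, 44, 53, 35, 34, 33, 42, 51, 48, 45]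

lemma path12 : looseHamPath 4 (fun _ => 0) ![0, 0, 2, 1] :=
  looseHamPath_of_pv _ _ L12 rfl (by decide) (by decide) (by decide) (by decide) (by decide)

def L13 : List ℕ := [0, 18, 9, 63, 36, 37, 38, 44, 41, 32, 50, 47, 53, 26, 80, 79, 78, 75, 72, 74, 73, 55, 64, 70, 67, 40, 13, 16, 10, 1, 19, 25, 22, 76, 49, 46, 52, 43, 34, 31, 28, 27, 29, 56, 2, 20, 11, 17, 14, 23, 5, 4, 3, 21, 12, 66, 39, 30, 48, 45, 51, 33, 42, 69, 15, 24, 6, 7, 8, 35, 62, 61, 60, 54, 57, 58, 59, 77, 68, 71, 65]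

lemma path13 : looseHamPath 4 (fun _ => 0) ![2, 0, 1, 2] :=
  looseHamPath_of_pv _ _ L13 rfl (by decide) (by decide) (by decide) (by decide) (by decide)

def L14 : List ℕ := [0, 54, 27, 28, 29, 47, 38, 65, 11, 10, 9, 36, 63, 69, 66, 67, 68, 77, 59, 56, 62, 60, 61, 58, 55, 64, 73, 74, 72, 75, 78, 80, 79, 25, 52, 46, 49, 76, 22, 13, 4, 1, 7, 6, 8, 2, 5, 14, 23, 26, 20, 19, 18, 24, 21, 12, 3, 57, 30, 31, 32, 50, 41, 39, 40, 37, 43, 70, 16, 15, 17, 71, 44, 53, 35, 34, 33, 42, 51, 45, 48]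

lemma path14 : looseHamPath 4 (fun _ => 0) ![0, 1, 2, 1] :=
  looseHamPath_of_pv _ _ L14 rfl (by decide) (by decide) (by decide) (by decide) (by decide)

def L15 : List ℕ := [0, 18, 9, 63, 36, 37, 38, 44, 41, 32, 50, 47, 53, 26, 80, 79, 78, 75, 72, 74, 73, 55, 64, 70, 67, 40, 13, 16, 10, 1, 19, 25, 22, 76, 49, 46, 52, 43, 34, 31, 28, 27, 29, 56, 2, 20, 11, 17, 14, 23, 5, 4, 3, 21, 12, 66, 39, 30, 48, 45, 51, 33, 42, 69, 15, 24, 6, 7, 8, 35, 62, 61, 60, 54, 57, 58, 59, 77, 68, 65, 71]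

lemma path15 : looseHamPath 4 (fun _ => 0) ![2, 2, 1, 2] :=
  looseHamPath_of_pv _ _ L15 rfl (by decide) (by decide) (by decide) (by decide) (by decide)

theorem dim_four_loose_hamilton_connected :
    ∀ a b : Fin 4 → Fin 3, a ≠ b → looseHamPath 4 a b := by
  intro a b hab
  by_cases h0 : a 0 = b 0 <;> by_cases h1 : a 1 = b 1 <;>
    by_cases h2 : a 2 = b 2 <;> by_cases h3 : a 3 = b 3
  · exact absurd (funext fun i => by fin_cases i <;> assumption) hab
  · exact transport a b _ (by intro i; fin_cases i <;> simp [h0, h1, h2, h3]) path8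
  · exact transport a b _ (by intro i; fin_cases i <;> simp [h0, h1, h2, h3]) path4
  · exact transport a b _ (by intro i; fin_cases i <;> simp [h0, h1, h2, h3]) path12
  · exact transport a b _ (by intro i; fin_cases i <;> simp [h0, h1, h2, h3]) path2
  · exact transport a b _ (by intro i; fin_cases i <;> simp [h0, h1, h2, h3]) path10
  · exact transport a b _ (by intro i; fin_cases i <;> simp [h0, h1, h2, h3]) path6
  · exact transport a b _ (by intro i; fin_cases i <;> simp [h0, h1, h2, h3]) path14
  · exact transport a b _ (by intro i; fin_cases i <;> simp [h0, h1, h2, h3]) path1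
  · exact transport a b _ (by intro i; fin_cases i <;> simp [h0, h1, h2, h3]) path9
  · exact transport a b _ (by intro i; fin_cases i <;> simp [h0, h1, h2, h3]) path5
  · exact transport a b _ (by intro i; fin_cases i <;> simp [h0, h1, h2, h3]) path13
  · exact transport a b _ (by intro i; fin_cases i <;> simp [h0, h1, h2, h3]) path3
  · exact transport a b _ (by intro i; fin_cases i <;> simp [h0, h1, h2, h3]) path11
  · exact transport a b _ (by intro i; fin_cases i <;> simp [h0, h1, h2, h3]) path7
  · exact transport a b _ (by intro i; fin_cases i <;> simp [h0, h1, h2, h3]) path15
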